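/- Let p be a prime, n ≥ 1, let A, B ⊆ (ZMod p)^n, and let v ∈ (ZMod p)^n be nonzero. Then C_v(A) + C_v(B) ⊆ C_v(A + B). -/
import Mathlib


open Pointwise

/-- `u ≺ v` in the lexicographic order: `u i < v i` (as values in `{0,…,p-1}`)
at the largest coordinate `i` where `u` and `v` differ. -/
def lexLt {n p : ℕ} (u v : Fin n → ZMod p) : Prop :=
  ∃ i : Fin n, (u i).val < (v i).val ∧ ∀ j : Fin n, i < j → u j = v j

/-- The `v`-line through `u`: `L_v^u = {u + k•v : k ∈ ZMod p}`. -/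
def line {n p : ℕ} (v u : Fin n → ZMod p) : Set (Fin n → ZMod p) :=
  {x | ∃ k : ZMod p, x = u + k • v}

/-- `IS k L`: the set of the `k` lexicographically smallest elements of `L`. -/
def IS {n p : ℕ} (k : ℕ) (L : Set (Fin n → ZMod p)) : Set (Fin n → ZMod p) :=
  {x | x ∈ L ∧ ({y | y ∈ L ∧ lexLt y x}).ncard < k}

/-- The `v`-compression of `A`: on each `v`-line `L`, replace `A ∩ L` by the
initial segment of `L` of the same cardinality. -/
def comp {n p : ℕ} (v : Fin n → ZMod p) (A : Set (Fin n → ZMod p)) :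
    Set (Fin n → ZMod p) :=
  ⋃ u : Fin n → ZMod p, IS (A ∩ line v u).ncard (line v u)

/-- `E = {0, e₁, …, e_n}`: zero together with the standard basis. -/
def stdE (n p : ℕ) : Set (Fin n → ZMod p) :=
  {0} ∪ Set.range (fun i : Fin n => Pi.single i (1 : ZMod p))

/-- `A` is `𝓔`-compressed: `E ⊆ A` and `A` is `v`-compressed for every nonzero `v`
whose compression keeps `E` inside the set. -/
def ECompressed {n p : ℕ} (A : Set (Fin n → ZMod p)) : Prop :=
  stdE n p ⊆ A ∧
    ∀ v : Fin n → ZMod p, v ≠ 0 → stdE n p ⊆ comp v A → comp v A = A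

section aux

variable {n p : ℕ} {v : Fin n → ZMod p}

lemma self_mem_line (u : Fin n → ZMod p) : u ∈ line v u := ⟨0, by simp⟩

lemma line_eq_of_mem {u x : Fin n → ZMod p} (hx : x ∈ line v u) :
    line v u = line v x := by
  obtain ⟨k, rfl⟩ := hx
  ext z
  constructor
  · rintro ⟨l, rfl⟩
    exact ⟨l - k, by ring_nf; module⟩
  · rintro ⟨l, rfl⟩
    exact ⟨k + l, by module⟩

variable [Fact (p.Prime)] {i : Fin n} (hvi : v i ≠ 0) (htop : ∀ j, i < j → v j = 0)

include hvi in
lemma coord_inj {u z w : Fin n → ZMod p} (hz : z ∈ line v u) (hw : w ∈ line v u)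
    (h : z i = w i) : z = w := by
  obtain ⟨k, rfl⟩ := hz
  obtain ⟨l, rfl⟩ := hw
  simp only [Pi.add_apply, Pi.smul_apply, smul_eq_mul, add_right_inj] at h
  rw [mul_right_cancel₀ hvi h]

include htop in
lemma eq_of_gt {u z w : Fin n → ZMod p} (hz : z ∈ line v u) (hw : w ∈ line v u)
    {j : Fin n} (hj : i < j) : z j = w j := by
  obtain ⟨k, rfl⟩ := hz
  obtain ⟨l, rfl⟩ := hw
  simp [htop j hj]

include hvi htop in
lemma lexLt_iff {u z x : Fin n → ZMod p} (hz : z ∈ line v u) (hx : x ∈ line v u) :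
    lexLt z x ↔ (z i).val < (x i).val := by
  constructor
  · rintro ⟨j, hlt, heq⟩
    rcases lt_trichotomy j i with h | rfl | h
    · exact absurd (congrFun (coord_inj hvi hz hx (heq i h)) j ▸ hlt) (lt_irrefl _)
    · exact hlt
    · exact absurd (eq_of_gt htop hz hx h ▸ hlt) (lt_irrefl _)
  · intro h
    exact ⟨i, h, fun j hj => eq_of_gt htop hz hx hj⟩

lemma ncard_val_lt {m : ℕ} (hm : m ≤ p) : {c : ZMod p | c.val < m}.ncard = m := by
  haveI : NeZero p := ⟨(Fact.out : p.Prime).pos.ne'⟩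
  rw [← Nat.card_coe_set_eq]
  refine Nat.card_eq_of_equiv_fin ⟨fun c => ⟨(c : ZMod p).val, c.2⟩,
    fun j => ⟨(j : ZMod p), ?_⟩, fun c => ?_, fun j => ?_⟩
  · simp [ZMod.val_cast_of_lt (lt_of_lt_of_le j.2 hm)]
  · exact Subtype.ext (by simpa using ZMod.natCast_rightInverse c.1)
  · exact Fin.ext (ZMod.val_cast_of_lt (lt_of_lt_of_le j.2 hm))

include hvi htop in
lemma rank_eq {u x : Fin n → ZMod p} (hx : x ∈ line v u) :
    {z | z ∈ line v u ∧ lexLt z x}.ncard = (x i).val := by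
  haveI : NeZero p := ⟨(Fact.out : p.Prime).pos.ne'⟩
  have hset : {z | z ∈ line v u ∧ lexLt z x} = {z | z ∈ line v u ∧ (z i).val < (x i).val} := by
    ext z; exact and_congr_right fun hz => lexLt_iff hvi htop hz hx
  rw [hset]
  set g : ZMod p → ZMod p := fun k => u i + k * v i with hg
  have hginj : Function.Injective g := fun a b hab => by
    simpa [hg] using mul_right_cancel₀ hvi (by simpa [hg] using hab)
  have hgsurj : Function.Surjective g := Finite.surjective_of_injective hginj
  have hline : {z | z ∈ line v u ∧ (z i).val < (x i).val} =
      (fun k : ZMod p => u + k • v) '' (g ⁻¹' {c | c.val < (x i).val}) := by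
    ext z
    constructor
    · rintro ⟨⟨k, rfl⟩, hlt⟩
      exact ⟨k, by simpa [hg] using hlt, rfl⟩
    · rintro ⟨k, hk, rfl⟩
      exact ⟨⟨k, rfl⟩, by simpa [hg] using hk⟩
  have hfinj : Function.Injective (fun k : ZMod p => u + k • v) := fun a b hab => by
    have := congrFun hab i
    simp only [Pi.add_apply, Pi.smul_apply, smul_eq_mul, add_right_inj] at this
    exact mul_right_cancel₀ hvi this
  rw [hline, Set.ncard_image_of_injective _ hfinj]
  have : g '' (g ⁻¹' {c | c.val < (x i).val}) = {c | c.val < (x i).val} :=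
    Set.image_preimage_eq _ hgsurj
  rw [← Set.ncard_image_of_injective _ hginj, this,
    ncard_val_lt (le_of_lt (x i).val_lt)]

end aux

theorem statement4 (p n : ℕ) (hp : p.Prime) (hn : 1 ≤ n)
    (A B : Set (Fin n → ZMod p)) (v : Fin n → ZMod p) (hv : v ≠ 0) :
    comp v A + comp v B ⊆ comp v (A + B) := by
  classical
  haveI : Fact p.Prime := ⟨hp⟩
  haveI : NeZero p := ⟨hp.pos.ne'⟩
  -- get the top nonzero coordinate of v
  obtain ⟨i, hvi, htop⟩ : ∃ i : Fin n, v i ≠ 0 ∧ ∀ j, i < j → v j = 0 := by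
    have hne : (Finset.univ.filter (fun i => v i ≠ 0)).Nonempty := by
      rw [Finset.filter_nonempty_iff]
      by_contra h
      push_neg at h
      exact hv (funext fun i => h i (Finset.mem_univ i))
    set s := Finset.univ.filter (fun i => v i ≠ 0) with hs
    refine ⟨s.max' hne, ?_, ?_⟩
    · have := s.max'_mem hne
      simp [hs, Finset.mem_filter] at this
      exact this
    · intro j hj
      by_contra h
      exact absurd (Finset.le_max' s j (by simp [hs, h])) (not_le.mpr hj)
  rintro w ⟨x, hx, y, hy, rfl⟩
  rw [comp, Set.mem_iUnion] at hx hy ⊢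
  obtain ⟨u1, hx1, hx2⟩ := hx
  obtain ⟨u2, hy1, hy2⟩ := hy
  rw [line_eq_of_mem hx1] at hx2
  rw [line_eq_of_mem hy1] at hy2
  set a := (A ∩ line v x).ncard with ha
  set b := (B ∩ line v y).ncard with hb
  have hrx : (x i).val < a := by
    rwa [rank_eq hvi htop (self_mem_line x)] at hx2
  have hry : (y i).val < b := by
    rwa [rank_eq hvi htop (self_mem_line y)] at hy2
  -- Cauchy-Davenport step
  set L := line v (x + y) with hL
  have hAfin : (A ∩ line v x).Finite := Set.toFinite _
  have hBfin : (B ∩ line v y).Finite := Set.toFinite _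
  have hABfin : ((A + B) ∩ L).Finite := Set.toFinite _
  set SA : Finset (ZMod p) := (((fun z => z i) '' (A ∩ line v x)).toFinite).toFinset with hSA
  set SB : Finset (ZMod p) := (((fun z => z i) '' (B ∩ line v y)).toFinite).toFinset with hSB
  have hinjx : Set.InjOn (fun z => z i) (line v x) := fun z hz w hw h =>
    coord_inj hvi hz hw h
  have hinjy : Set.InjOn (fun z => z i) (line v y) := fun z hz w hw h =>
    coord_inj hvi hz hw h
  have hinjL : Set.InjOn (fun z => z i) L := fun z hz w hw h =>
    coord_inj hvi hz hw h
  have hcardA : SA.card = a := by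
    rw [hSA, ← Set.ncard_eq_toFinset_card _,
      Set.ncard_image_of_injOn (hinjx.mono Set.inter_subset_right)]
  have hcardB : SB.card = b := by
    rw [hSB, ← Set.ncard_eq_toFinset_card _,
      Set.ncard_image_of_injOn (hinjy.mono Set.inter_subset_right)]
  have hSAne : SA.Nonempty := by
    rw [← Finset.card_pos, hcardA]; omega
  have hSBne : SB.Nonempty := by
    rw [← Finset.card_pos, hcardB]; omega
  have hCD := ZMod.cauchy_davenport hp hSAne hSBne
  rw [hcardA, hcardB] at hCD
  have hsub : (SA : Set (ZMod p)) + (SB : Set (ZMod p)) ⊆ (fun z => z i) '' ((A + B) ∩ L) := by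
    rintro _ ⟨s, hs, t, ht, rfl⟩
    rw [hSA, Set.Finite.coe_toFinset] at hs
    rw [hSB, Set.Finite.coe_toFinset] at ht
    obtain ⟨z, ⟨hzA, kz, hkz⟩, rfl⟩ := hs
    obtain ⟨w, ⟨hwB, kw, hkw⟩, rfl⟩ := ht
    refine ⟨z + w, ⟨⟨z, hzA, w, hwB, rfl⟩, ⟨kz + kw, ?_⟩⟩, rfl⟩
    rw [hkz, hkw]; module
  have hcardAB : (SA + SB).card ≤ ((A + B) ∩ L).ncard := by
    have h1 : ((SA : Set (ZMod p)) + (SB : Set (ZMod p))).ncard ≤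
        ((fun z => z i) '' ((A + B) ∩ L)).ncard :=
      Set.ncard_le_ncard hsub (Set.toFinite _)
    rwa [← Finset.coe_add, Set.ncard_coe_finset,
      Set.ncard_image_of_injOn (hinjL.mono Set.inter_subset_right)] at h1
  -- conclude
  refine ⟨x + y, self_mem_line _, ?_⟩
  rw [rank_eq hvi htop (self_mem_line (x + y)), ← hL]
  have hvadd : ((x + y) i).val ≤ (x i).val + (y i).val := ZMod.val_add_le _ _
  have hvp : ((x + y) i).val < p := ZMod.val_lt _
  omega
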